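/- Let V be an F-vector space and 𝓛 a series in V such that the 𝓛-topology on V (the vector-space topology with 𝓛\{0} a neighborhood basis at 0) is Hausdorff and complete. Let W ≤ V be a dense subspace and let h ∈ GL(W) belong to the stability group of the series {U ∩ W : U ∈ 𝓛} in W. Then there is a unique h̄ ∈ S(𝓛) ≤ GL(V) extending h, i.e. h̄(w) = h(w) for all w ∈ W. -/

import Mathlib

open Filter Topology

section Defs

variable {F V : Type*} [Field F] [AddCommGroup V] [Module F V]

/-- A *series* in a vector space `V`. -/
def IsSeries (𝓛 : Set (Submodule F V)) : Prop :=
  ⊥ ∈ 𝓛 ∧ ⊤ ∈ 𝓛 ∧ IsChain (· ≤ ·) 𝓛 ∧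
    ∀ 𝓕 : Set (Submodule F V), 𝓕 ⊆ 𝓛 → 𝓕.Nonempty → sInf 𝓕 ∈ 𝓛 ∧ sSup 𝓕 ∈ 𝓛

/-- `(B, T)` is a *jump* of the series `𝓛`. -/
def IsJump (𝓛 : Set (Submodule F V)) (B T : Submodule F V) : Prop :=
  B ∈ 𝓛 ∧ T ∈ 𝓛 ∧ B < T ∧ ∀ U ∈ 𝓛, B ≤ U → U ≤ T → U = B ∨ U = T

/-- The *stability group* `S(𝓛)` of a series `𝓛`. -/
def stab (𝓛 : Set (Submodule F V)) : Set (V ≃ₗ[F] V) :=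
  {g | ∀ B T : Submodule F V, IsJump 𝓛 B T → ∀ x ∈ T, g x - x ∈ B}

end Defs

namespace Stmt13Aux

variable {F V : Type*} [Field F] [AddCommGroup V] [Module F V]

lemma mem_sSup_chain {S : Set (Submodule F V)} (hne : S.Nonempty)
    (hch : DirectedOn (· ≤ ·) S) {x : V} : x ∈ sSup S ↔ ∃ U ∈ S, x ∈ U := by
  haveI : Nonempty S := hne.to_subtype
  rw [sSup_eq_iSup', Submodule.mem_iSup_of_directed _ hch.directed_val]
  simp

variable {𝓛 : Set (Submodule F V)}

lemma chain_directedOn (hser : IsSeries 𝓛) {S : Set (Submodule F V)} (hS : S ⊆ 𝓛) :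
    DirectedOn (· ≤ ·) S := by
  intro U hU U' hU'
  rcases hser.2.2.1.total (hS hU) (hS hU') with hle | hle
  · exact ⟨U', hU', hle, le_rfl⟩
  · exact ⟨U, hU, le_rfl, hle⟩

/-- The jump of `𝓛` determined by a nonzero element `x`. -/
lemma jump_at (hser : IsSeries 𝓛) {x : V} (hx : x ≠ 0) :
    IsJump 𝓛 (sSup {U | U ∈ 𝓛 ∧ x ∉ U}) (sInf {U | U ∈ 𝓛 ∧ x ∈ U}) ∧
      x ∈ sInf {U | U ∈ 𝓛 ∧ x ∈ U} ∧ x ∉ sSup {U | U ∈ 𝓛 ∧ x ∉ U} := by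
  obtain ⟨hbot, htop, hchain, hclosed⟩ := hser
  set Sb : Set (Submodule F V) := {U | U ∈ 𝓛 ∧ x ∉ U} with hSb
  set St : Set (Submodule F V) := {U | U ∈ 𝓛 ∧ x ∈ U} with hSt
  have hSbsub : Sb ⊆ 𝓛 := fun U hU => hU.1
  have hStsub : St ⊆ 𝓛 := fun U hU => hU.1
  have hSbne : Sb.Nonempty := ⟨⊥, hbot, by simpa using hx⟩
  have hStne : St.Nonempty := ⟨⊤, htop, trivial⟩
  have hB : sSup Sb ∈ 𝓛 := (hclosed Sb hSbsub hSbne).2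
  have hT : sInf St ∈ 𝓛 := (hclosed St hStsub hStne).1
  have hxT : x ∈ sInf St := Submodule.mem_sInf.2 fun U hU => hU.2
  have hxB : x ∉ sSup Sb := by
    rw [mem_sSup_chain hSbne (chain_directedOn ⟨hbot, htop, hchain, hclosed⟩ hSbsub)]
    rintro ⟨U, hU, hxU⟩
    exact hU.2 hxU
  have hBT : sSup Sb ≤ sInf St := by
    apply sSup_le
    intro U hU
    apply le_sInf
    intro U' hU'
    rcases hchain.total hU.1 hU'.1 with hle | hle
    · exact hle
    · exact absurd (hle hU'.2) hU.2
  have hBTlt : sSup Sb < sInf St := lt_of_le_of_ne hBT (fun he => hxB (he ▸ hxT))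
  refine ⟨⟨hB, hT, hBTlt, ?_⟩, hxT, hxB⟩
  intro U hU hBU hUT
  by_cases hxU : x ∈ U
  · exact Or.inr (le_antisymm hUT (sInf_le ⟨hU, hxU⟩))
  · exact Or.inl (le_antisymm (le_sSup ⟨hU, hxU⟩) hBU)

lemma stab_strong (hser : IsSeries 𝓛) {g : V ≃ₗ[F] V} (hg : g ∈ stab 𝓛) :
    ∀ U ∈ 𝓛, ∀ x ∈ U, g x - x ∈ U := by
  intro U hU x hx
  rcases eq_or_ne x 0 with rfl | hx0
  · simp
  obtain ⟨hjump, hxT, -⟩ := jump_at hser hx0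
  have hb := hg _ _ hjump x hxT
  have hTU : sInf {U' | U' ∈ 𝓛 ∧ x ∈ U'} ≤ U := sInf_le ⟨hU, hx⟩
  exact hTU (hjump.2.2.1.le hb)

lemma stab_strong_symm (hser : IsSeries 𝓛) {g : V ≃ₗ[F] V} (hg : g ∈ stab 𝓛) :
    ∀ U ∈ 𝓛, ∀ x ∈ U, g.symm x - x ∈ U := by
  intro U hU x hx
  set y := g.symm x with hy
  have hgy : g y = x := g.apply_symm_apply x
  by_cases hyU : y ∈ U
  · have := stab_strong hser hg U hU y hyU
    rw [hgy] at this
    have h2 := U.neg_mem this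
    rwa [neg_sub] at h2
  · exfalso
    have hy0 : y ≠ 0 := fun h0 => hyU (h0 ▸ U.zero_mem)
    obtain ⟨hjump, hyT, hyB⟩ := jump_at hser hy0
    have hb := hg _ _ hjump y hyT
    have hUB : U ≤ sSup {U' | U' ∈ 𝓛 ∧ y ∉ U'} := le_sSup ⟨hU, hyU⟩
    have hxB : x ∈ sSup {U' | U' ∈ 𝓛 ∧ y ∉ U'} := hUB hx
    rw [hgy] at hb
    exact hyB (by simpa using (sSup {U' | U' ∈ 𝓛 ∧ y ∉ U'}).sub_mem hxB hb)

lemma induced_isSeries (𝓛 : Set (Submodule F V)) (hser : IsSeries 𝓛) (W : Submodule F V) :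
    IsSeries {X : Submodule F ↥W | ∃ U ∈ 𝓛, X = U.comap W.subtype} := by
  obtain ⟨hbot, htop, hchain, hclosed⟩ := hser
  have dir : ∀ S : Set (Submodule F V), S ⊆ 𝓛 → DirectedOn (· ≤ ·) S := by
    intro S hS U hU U' hU'
    rcases hchain.total (hS hU) (hS hU') with hle | hle
    · exact ⟨U', hU', hle, le_rfl⟩
    · exact ⟨U, hU, le_rfl, hle⟩
  refine ⟨⟨⊥, hbot, by simp⟩, ⟨⊤, htop, by simp⟩, ?_, ?_⟩
  · rintro X ⟨U, hU, rfl⟩ Y ⟨U', hU', rfl⟩ -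
    rcases hchain.total hU hU' with hle | hle
    · exact Or.inl (Submodule.comap_mono hle)
    · exact Or.inr (Submodule.comap_mono hle)
  · intro 𝓕 h𝓕 h𝓕ne
    set 𝓖 : Set (Submodule F V) := {U | U ∈ 𝓛 ∧ U.comap W.subtype ∈ 𝓕} with h𝓖
    have h𝓖sub : 𝓖 ⊆ 𝓛 := fun U hU => hU.1
    have h𝓖ne : 𝓖.Nonempty := by
      obtain ⟨X, hX⟩ := h𝓕ne
      obtain ⟨U, hU, rfl⟩ := h𝓕 hX
      exact ⟨U, hU, hX⟩
    have himg : ∀ X ∈ 𝓕, ∃ U ∈ 𝓖, X = U.comap W.subtype := by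
      intro X hX
      obtain ⟨U, hU, rfl⟩ := h𝓕 hX
      exact ⟨U, ⟨hU, hX⟩, rfl⟩
    constructor
    · refine ⟨sInf 𝓖, (hclosed 𝓖 h𝓖sub h𝓖ne).1, ?_⟩
      ext x
      simp only [Submodule.mem_sInf, Submodule.mem_comap, Submodule.subtype_apply]
      constructor
      · intro hx U hU
        exact hx _ hU.2
      · intro hx X hX
        obtain ⟨U, hU, rfl⟩ := himg X hX
        exact hx U hU
    · refine ⟨sSup 𝓖, (hclosed 𝓖 h𝓖sub h𝓖ne).2, ?_⟩
      ext x
      rw [Submodule.mem_comap, Submodule.subtype_apply,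
        mem_sSup_chain h𝓖ne (dir 𝓖 h𝓖sub),
        mem_sSup_chain h𝓕ne]
      · constructor
        · rintro ⟨X, hX, hxX⟩
          obtain ⟨U, hU, rfl⟩ := himg X hX
          exact ⟨U, hU, hxX⟩
        · rintro ⟨U, hU, hxU⟩
          exact ⟨U.comap W.subtype, hU.2, hxU⟩
      · intro X hX X' hX'
        obtain ⟨U, hU, rfl⟩ := himg X hX
        obtain ⟨U', hU', rfl⟩ := himg X' hX'
        rcases hchain.total hU.1 hU'.1 with hle | hle
        · exact ⟨_, hX', Submodule.comap_mono hle, le_rfl⟩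
        · exact ⟨_, hX, le_rfl, Submodule.comap_mono hle⟩

end Stmt13Aux

/-- Suppose the `𝓛`-topology on `V` (the group topology whose
neighborhoods of `0` have the nonzero members of `𝓛` as a basis) is Hausdorff and
complete.  If `W ≤ V` is dense and `h ∈ GL(W)` lies in the stability group of the
induced series `{U ∩ W : U ∈ 𝓛}`, then there is a unique `h̄ ∈ S(𝓛)` with
`h̄ w = h w` for all `w ∈ W`. -/
theorem stmt13 {F V : Type*} [Field F] [AddCommGroup V] [Module F V]
    [UniformSpace V] [IsUniformAddGroup V]
    (𝓛 : Set (Submodule F V)) (hser : IsSeries 𝓛)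
    (hbasis : (nhds (0 : V)).HasBasis
      (fun U : Submodule F V => U ∈ 𝓛 ∧ U ≠ ⊥) (fun U => (U : Set V)))
    (hT2 : T2Space V) (hcompl : CompleteSpace V)
    (W : Submodule F V) (hdense : Dense (W : Set V))
    (h : ↥W ≃ₗ[F] ↥W)
    (hstab : h ∈ stab {X : Submodule F ↥W | ∃ U ∈ 𝓛, X = U.comap W.subtype}) :
    ∃! hbar : V ≃ₗ[F] V, hbar ∈ stab 𝓛 ∧ ∀ w : ↥W, hbar (w : V) = (h w : V) := by
  classical
  haveI := hT2
  haveI := hcompl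
  haveI : IsUniformAddGroup ↥W := W.toAddSubgroup.isUniformAddGroup
  set 𝓛' : Set (Submodule F ↥W) := {X | ∃ U ∈ 𝓛, X = U.comap W.subtype} with h𝓛'def
  have hser' : IsSeries 𝓛' := Stmt13Aux.induced_isSeries 𝓛 hser W
  -- strong form of the stability hypothesis on `W`
  have hW : ∀ U ∈ 𝓛, ∀ w : ↥W, (w : V) ∈ U → ((h w : V) - (w : V)) ∈ U := by
    intro U hU w hw
    have := Stmt13Aux.stab_strong hser' hstab (U.comap W.subtype) ⟨U, hU, rfl⟩ w
      (by simpa using hw)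
    simpa using this
  have hWs : ∀ U ∈ 𝓛, ∀ w : ↥W, (w : V) ∈ U → ((h.symm w : V) - (w : V)) ∈ U := by
    intro U hU w hw
    have := Stmt13Aux.stab_strong_symm hser' hstab (U.comap W.subtype) ⟨U, hU, rfl⟩ w
      (by simpa using hw)
    simpa using this
  -- members of `stab 𝓛` are continuous
  have stabCont : ∀ g : V ≃ₗ[F] V, g ∈ stab 𝓛 → Continuous g := by
    intro g hg
    have h0 : ContinuousAt g.toLinearMap 0 := by
      unfold ContinuousAt
      rw [map_zero, hbasis.tendsto_right_iff]
      rintro U ⟨hU, hUne⟩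
      filter_upwards [hbasis.mem_of_mem ⟨hU, hUne⟩] with v hv
      have := Stmt13Aux.stab_strong hser hg U hU v hv
      simpa using U.add_mem hv this
    exact continuous_of_continuousAt_zero g.toLinearMap h0
  -- the map `w ↦ h w` as a linear map into `V`, uniformly continuous
  set L : ↥W →ₗ[F] V := W.subtype.comp h.toLinearMap with hLdef
  set L' : ↥W →ₗ[F] V := W.subtype.comp h.symm.toLinearMap with hL'def
  have hcont0 : ∀ (M : ↥W →ₗ[F] V),
      (∀ U ∈ 𝓛, ∀ w : ↥W, (w : V) ∈ U → (M w - (w : V)) ∈ U) → UniformContinuous M := by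
    intro M hM
    apply uniformContinuous_of_continuousAt_zero M
    unfold ContinuousAt
    rw [map_zero, hbasis.tendsto_right_iff]
    rintro U ⟨hU, hUne⟩
    have hmem : (Subtype.val ⁻¹' (U : Set V) : Set ↥W) ∈ 𝓝 (0 : ↥W) := by
      apply (continuous_subtype_val.continuousAt (x := (0 : ↥W))).preimage_mem_nhds
      simpa using hbasis.mem_of_mem ⟨hU, hUne⟩
    filter_upwards [hmem] with w hw
    have := hM U hU w hw
    simpa using U.add_mem (show (w : V) ∈ U from hw) this
  have hLuc : UniformContinuous L := hcont0 L (by intro U hU w hw; exact hW U hU w hw)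
  have hL'uc : UniformContinuous L' := hcont0 L' (by intro U hU w hw; exact hWs U hU w hw)
  have hui : IsUniformInducing (Subtype.val : ↥W → V) :=
    isUniformEmbedding_subtype_val.isUniformInducing
  have hdr : DenseRange (Subtype.val : ↥W → V) := hdense.denseRange_val
  set ψ : V → V := (hui.isDenseInducing hdr).extend L with hψdef
  set φ : V → V := (hui.isDenseInducing hdr).extend L' with hφdef
  have hψc : Continuous ψ := (uniformContinuous_uniformly_extend hui hdr hLuc).continuous
  have hφc : Continuous φ := (uniformContinuous_uniformly_extend hui hdr hL'uc).continuous
  have hψe : ∀ w : ↥W, ψ (w : V) = (h w : V) := fun w =>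
    uniformly_extend_of_ind hui hdr hLuc w
  have hφe : ∀ w : ↥W, φ (w : V) = (h.symm w : V) := fun w =>
    uniformly_extend_of_ind hui hdr hL'uc w
  -- extension principle
  have extD : ∀ g₁ g₂ : V → V, Continuous g₁ → Continuous g₂ →
      (∀ w : ↥W, g₁ (w : V) = g₂ (w : V)) → g₁ = g₂ := by
    intro g₁ g₂ hc₁ hc₂ hagree
    apply hc₁.ext_on hdense hc₂
    intro x hx
    exact hagree ⟨x, hx⟩
  -- additivity
  have hadd : ∀ x y : V, ψ (x + y) = ψ x + ψ y := by
    have hp : (fun p : V × V => ψ (p.1 + p.2)) = fun p : V × V => ψ p.1 + ψ p.2 := by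
      apply Continuous.ext_on (hdense.prod hdense)
      · exact hψc.comp continuous_add
      · exact (hψc.comp continuous_fst).add (hψc.comp continuous_snd)
      · rintro ⟨a, b⟩ ⟨ha, hb⟩
        show ψ (a + b) = ψ a + ψ b
        have h1 : a + b = ((⟨a, ha⟩ + ⟨b, hb⟩ : ↥W) : V) := rfl
        have h2 : a = ((⟨a, ha⟩ : ↥W) : V) := rfl
        have h3 : b = ((⟨b, hb⟩ : ↥W) : V) := rfl
        rw [h1, hψe, map_add, Submodule.coe_add, ← hψe, ← hψe]
    intro x y
    exact congrFun hp (x, y)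
  -- scalar multiplication
  have hsmulcont : ∀ c : F, Continuous fun v : V => c • v := by
    intro c
    apply continuous_of_continuousAt_zero (DistribMulAction.toAddMonoidHom V c)
    unfold ContinuousAt
    rw [map_zero, hbasis.tendsto_right_iff]
    rintro U ⟨hU, hUne⟩
    filter_upwards [hbasis.mem_of_mem ⟨hU, hUne⟩] with v hv
    exact U.smul_mem c hv
  have hsmul : ∀ (c : F) (x : V), ψ (c • x) = c • ψ x := by
    intro c
    have hp := extD (fun x => ψ (c • x)) (fun x => c • ψ x)
      (hψc.comp (hsmulcont c)) ((hsmulcont c).comp hψc)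
      (by
        intro w
        show ψ (c • (w : V)) = c • ψ (w : V)
        have h1 : c • (w : V) = ((c • w : ↥W) : V) := rfl
        rw [h1, hψe, hψe, map_smul, Submodule.coe_smul])
    exact fun x => congrFun hp x
  -- mutual inverses
  have hinv₁ : ∀ x : V, ψ (φ x) = x := by
    have hp := extD (fun x => ψ (φ x)) id (hψc.comp hφc) continuous_id
      (by
        intro w
        show ψ (φ (w : V)) = (w : V)
        rw [hφe, hψe, h.apply_symm_apply])
    exact fun x => congrFun hp x
  have hinv₂ : ∀ x : V, φ (ψ x) = x := by
    have hp := extD (fun x => φ (ψ x)) id (hφc.comp hψc) continuous_id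
      (by
        intro w
        show φ (ψ (w : V)) = (w : V)
        rw [hψe, hφe, h.symm_apply_apply])
    exact fun x => congrFun hp x
  -- the extension as a linear equivalence
  set hbar : V ≃ₗ[F] V :=
    { toFun := ψ
      invFun := φ
      left_inv := hinv₂
      right_inv := hinv₁
      map_add' := hadd
      map_smul' := hsmul } with hbardef
  have hbar_apply : ∀ x : V, hbar x = ψ x := fun _ => rfl
  -- membership in the stability group
  have hbar_stab : hbar ∈ stab 𝓛 := by
    rintro B T hjump x hxT
    show ψ x - x ∈ B
    have hTne : T ≠ ⊥ := by
      rintro rfl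
      exact absurd hjump.2.2.1 (not_lt_bot)
    have hBclosed : IsClosed (B : Set V) := by
      rcases eq_or_ne B ⊥ with rfl | hBne
      · simpa using (isClosed_singleton (x := (0 : V)))
      · have hopen : IsOpen (B : Set V) := by
          have := AddSubgroup.isOpen_of_mem_nhds B.toAddSubgroup
            (g := (0 : V)) (by simpa using hbasis.mem_of_mem ⟨hjump.1, hBne⟩)
          simpa using this
        exact AddSubgroup.isClosed_of_isOpen B.toAddSubgroup (by simpa using hopen)
    have hb0 : (𝓝 x).HasBasis (fun U : Submodule F V => U ∈ 𝓛 ∧ U ≠ ⊥)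
        (fun U => (x + ·) '' (U : Set V)) := by
      rw [← map_add_left_nhds_zero x]
      exact hbasis.map _
    have hxcl : x ∈ closure ((T : Set V) ∩ (W : Set V)) := by
      rw [mem_closure_iff_nhds_basis hb0]
      rintro U ⟨hU, hUne⟩
      obtain ⟨U', hU'𝓛, hU'ne, hU'U, hU'T⟩ :
          ∃ U', U' ∈ 𝓛 ∧ U' ≠ ⊥ ∧ U' ≤ U ∧ U' ≤ T := by
        rcases hser.2.2.1.total hU hjump.2.1 with hle | hle
        · exact ⟨U, hU, hUne, le_rfl, hle⟩
        · exact ⟨T, hjump.2.1, hTne, hle, le_rfl⟩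
      have hU'open : IsOpen (U' : Set V) := by
        have := AddSubgroup.isOpen_of_mem_nhds U'.toAddSubgroup
          (g := (0 : V)) (by simpa using hbasis.mem_of_mem ⟨hU'𝓛, hU'ne⟩)
        simpa using this
      have hopen : IsOpen ((x + ·) '' (U' : Set V)) := (isOpenMap_add_left x) _ hU'open
      have hne : ((x + ·) '' (U' : Set V)).Nonempty := ⟨x, 0, U'.zero_mem, by simp⟩
      obtain ⟨y, hyU', hyW⟩ := hdense.inter_open_nonempty _ hopen hne
      obtain ⟨u, hu, rfl⟩ := hyU'
      exact ⟨x + u, ⟨T.add_mem hxT (hU'T hu), hyW⟩, ⟨u, hU'U hu, rfl⟩⟩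
    have himg : (fun v => ψ v - v) '' ((T : Set V) ∩ (W : Set V)) ⊆ (B : Set V) := by
      rintro - ⟨y, ⟨hyT, hyW⟩, rfl⟩
      set w : ↥W := ⟨y, hyW⟩ with hwdef
      have hy : y = (w : V) := rfl
      show ψ y - y ∈ B
      rcases eq_or_ne w 0 with hw0 | hw0
      · have hy0 : y = 0 := by rw [hy, hw0]; simp
        have : ψ (0 : V) = 0 := by
          have := hψe 0
          simpa using this
        rw [hy0, this]
        simp
      · have hle : sSup {X | X ∈ 𝓛' ∧ w ∉ X} ≤ B.comap W.subtype := by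
          apply sSup_le
          rintro X ⟨⟨U, hU, rfl⟩, hwX⟩
          have hwU : (w : V) ∉ U := fun hc => hwX (by simpa using hc)
          have hUT : U ≤ T := by
            rcases hser.2.2.1.total hU hjump.2.1 with hle | hle
            · exact hle
            · exact absurd (hle (hy ▸ hyT)) hwU
          have hUB : U ≤ B := by
            rcases hser.2.2.1.total hU hjump.1 with hle | hle
            · exact hle
            · rcases hjump.2.2.2 U hU hle hUT with rfl | rfl
              · exact le_rfl
              · exact absurd (hy ▸ hyT) hwU
          exact Submodule.comap_mono hUB
        obtain ⟨hjump', hwT', hwB'⟩ := Stmt13Aux.jump_at hser' hw0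
        have hmem := hstab _ _ hjump' w hwT'
        have hB' := hle hmem
        have : ((h w : V) - (w : V)) ∈ B := by simpa using hB'
        rw [hy, hψe]
        exact this
    have hsub := image_closure_subset_closure_image (f := fun v => ψ v - v)
      (s := (T : Set V) ∩ (W : Set V)) (hψc.sub continuous_id)
    have hmem : ψ x - x ∈ closure ((fun v => ψ v - v) '' ((T : Set V) ∩ (W : Set V))) :=
      hsub ⟨x, hxcl, rfl⟩
    have := closure_mono himg hmem
    rwa [hBclosed.closure_eq] at this
  refine ⟨hbar, ⟨hbar_stab, fun w => hψe w⟩, ?_⟩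
  rintro g ⟨hg_stab, hg_ext⟩
  have hgc : Continuous g := stabCont g hg_stab
  have hfun : ⇑g = ψ := extD _ _ hgc hψc (fun w => by rw [hg_ext w, hψe w])
  exact DFunLike.ext g hbar fun x => by rw [show g x = ψ x from congrFun hfun x]; rfl
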